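/- Suppose for each k, J_k(δ_k) ≤ α(V(x_k) − V(x_{k+1})) where V(x) = xᵀP̃x with P̃ ≻ 0, J_k(δ_k) ≥ x_kᵀ Q x_k · δ'_min for some δ'_min > 0 with Q ≻ 0. Then ∑_{k=0}^∞ x_kᵀQx_k converges, hence x_k → 0. -/

import Mathlib

open Matrix

theorem stmt_19 (n : ℕ)
    (P Q : Matrix (Fin n) (Fin n) ℝ) (hP : P.PosDef) (hQ : Q.PosDef)
    (α δmin : ℝ) (hα : 0 < α) (hδ : 0 < δmin)
    (x : ℕ → (Fin n → ℝ)) (J : ℕ → ℝ) (hJ : ∀ k, 0 ≤ J k)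
    (hup : ∀ k, J k ≤ α * ((x k) ⬝ᵥ P.mulVec (x k) - (x (k + 1)) ⬝ᵥ P.mulVec (x (k + 1))))
    (hlow : ∀ k, ((x k) ⬝ᵥ Q.mulVec (x k)) * δmin ≤ J k) :
    Summable (fun k => (x k) ⬝ᵥ Q.mulVec (x k)) ∧
    Filter.Tendsto x Filter.atTop (nhds 0) := by
  -- V k := x k ⬝ Q P (x k), nonnegative
  set V : ℕ → ℝ := fun k => (x k) ⬝ᵥ P.mulVec (x k) with hV
  have hVnn : ∀ k, 0 ≤ V k := fun k => by
    have := hP.posSemidef.re_dotProduct_nonneg (x k)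
    simpa using this
  -- J is summable
  have hJsum : Summable J := by
    apply summable_of_sum_range_le hJ (c := α * V 0)
    intro N
    calc ∑ k ∈ Finset.range N, J k
        ≤ ∑ k ∈ Finset.range N, α * (V k - V (k + 1)) :=
          Finset.sum_le_sum fun k _ => hup k
      _ = α * (V 0 - V N) := by
          rw [← Finset.mul_sum, Finset.sum_range_sub']
      _ ≤ α * V 0 := by
          apply mul_le_mul_of_nonneg_left _ hα.le
          linarith [hVnn N]
  -- the Q-quadratic terms
  set g : ℕ → ℝ := fun k => (x k) ⬝ᵥ Q.mulVec (x k) with hg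
  have hgnn : ∀ k, 0 ≤ g k := fun k => by
    have := hQ.posSemidef.re_dotProduct_nonneg (x k)
    simpa using this
  have hgsum : Summable g :=
    Summable.of_nonneg_of_le hgnn (fun k => (le_div_iff₀ hδ).2 (hlow k)) (hJsum.div_const δmin)
  refine ⟨hgsum, ?_⟩
  -- g → 0
  have hg0 : Filter.Tendsto g Filter.atTop (nhds 0) := hgsum.tendsto_atTop_zero
  -- square root of Q
  set S := (open scoped MatrixOrder in CFC.sqrt Q) with hS
  have hSherm : S.IsHermitian := by
    open scoped MatrixOrder in exact (CFC.sqrt_nonneg Q).posSemidef.1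
  have hSS : S * S = Q := by
    open scoped MatrixOrder in exact CFC.sqrt_mul_sqrt_self Q hQ.posSemidef.nonneg
  have hSdet : IsUnit S.det := by
    have : S.det * S.det = Q.det := by rw [← det_mul, hSS]
    have hQd := hQ.det_pos
    rcases eq_or_ne S.det 0 with h | h
    · rw [h, mul_zero] at this; exact absurd this.symm (ne_of_gt hQd)
    · exact h.isUnit
  set y : ℕ → (Fin n → ℝ) := fun k => S.mulVec (x k) with hy
  -- g k = y k ⬝ y k
  have hgy : ∀ k, g k = (y k) ⬝ᵥ (y k) := by
    intro k
    have : Q.mulVec (x k) = S.mulVec (S.mulVec (x k)) := by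
      rw [mulVec_mulVec, hSS]
    rw [hg]
    simp only
    have hSt : Sᵀ = S := by
      have h := hSherm.eq
      simpa [Matrix.conjTranspose_eq_transpose_of_trivial] using h
    rw [this, dotProduct_mulVec, hy]
    congr 1
    rw [← hSt, vecMul_transpose]
    simp [hSt]
  -- each coordinate of y tends to 0
  have hy0 : Filter.Tendsto y Filter.atTop (nhds 0) := by
    rw [tendsto_pi_nhds]
    intro i
    rw [show (0 : Fin n → ℝ) i = 0 from rfl]
    rw [tendsto_zero_iff_abs_tendsto_zero]
    have hsq : Filter.Tendsto (fun k => Real.sqrt (g k)) Filter.atTop (nhds 0) := by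
      have := (Real.continuous_sqrt.tendsto 0).comp hg0
      simpa [Function.comp_def] using this
    apply squeeze_zero (fun k => abs_nonneg _) _ hsq
    intro k
    have h1 : (y k i) ^ 2 ≤ g k := by
      rw [hgy k, dotProduct]
      have : (y k i) ^ 2 = (y k i) * (y k i) := sq (y k i)
      rw [this]
      exact Finset.single_le_sum (f := fun j => y k j * y k j)
        (fun j _ => mul_self_nonneg _) (Finset.mem_univ i)
    calc |y k i| = Real.sqrt ((y k i) ^ 2) := (Real.sqrt_sq_eq_abs _).symm
      _ ≤ Real.sqrt (g k) := Real.sqrt_le_sqrt h1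
  -- recover x from y via S⁻¹
  have hxy : ∀ k, x k = S⁻¹.mulVec (y k) := by
    intro k
    rw [hy]
    simp only
    rw [mulVec_mulVec, nonsing_inv_mul S hSdet, one_mulVec]
  have hcont : Continuous (fun v : Fin n → ℝ => S⁻¹.mulVec v) := by
    exact LinearMap.continuous_of_finiteDimensional (Matrix.mulVecLin S⁻¹)
  have : Filter.Tendsto (fun k => S⁻¹.mulVec (y k)) Filter.atTop (nhds (S⁻¹.mulVec 0)) :=
    (hcont.tendsto 0).comp hy0
  rw [mulVec_zero] at this
  convert this using 1
  funext k
  exact hxy k
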